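/- Let (X, Y) be random variables, let μ be the law of Y, and for each x let μ_x be a regular conditional distribution of Y given X = x, with G_x(t) = μ_x([t, ∞)) and G(t) = P(Y ≥ t). If ∫ Var(G_X(t)) dμ(t) = 0, then X and Y are independent. -/

import Mathlib

open MeasureTheory ProbabilityTheory
open scoped ENNReal NNReal

open Set in
/-- Two measures dominated by a finite measure `μ` that agree on `Ici t` for `μ`-a.e. `t`
agree on every `Ici t`. -/
private lemma lemA {μ ρ₁ ρ₂ : Measure ℝ} [IsFiniteMeasure μ]
    (h₁ : ρ₁ ≤ μ) (h₂ : ρ₂ ≤ μ)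
    (h : ∀ᵐ t ∂μ, ρ₁ (Ici t) = ρ₂ (Ici t)) (t : ℝ) :
    ρ₁ (Ici t) = ρ₂ (Ici t) := by
  have hle₁ : ∀ s, ρ₁ s ≤ μ s := Measure.le_iff'.mp h₁
  have hle₂ : ∀ s, ρ₂ s ≤ μ s := Measure.le_iff'.mp h₂
  have hNnull : μ {u : ℝ | ¬ ρ₁ (Ici u) = ρ₂ (Ici u)} = 0 := h
  have hgood : ∀ u : ℝ, μ {u} ≠ 0 → ρ₁ (Ici u) = ρ₂ (Ici u) := by
    intro u hu
    by_contra hbad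
    have hsub : {u} ⊆ {w : ℝ | ¬ ρ₁ (Ici w) = ρ₂ (Ici w)} :=
      singleton_subset_iff.mpr hbad
    exact hu (le_antisymm ((measure_mono hsub).trans hNnull.le) (zero_le))
  by_cases ht : μ {t} ≠ 0
  · exact hgood t ht
  push_neg at ht
  have hsing : ∀ (ρ : Measure ℝ), (∀ s, ρ s ≤ μ s) → ∀ u : ℝ, μ {u} = 0 →
      ρ (Ici u) = ρ (Ioi u) := by
    intro ρ hρ u hu
    have h0 : ρ {u} = 0 := le_antisymm ((hρ _).trans hu.le) (zero_le)
    have := measure_diff_null (μ := ρ) (s := Ici u) h0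
    rw [Ici_sdiff_left] at this
    exact this.symm
  rw [hsing ρ₁ hle₁ t ht, hsing ρ₂ hle₂ t ht]
  by_cases hIoi : μ (Ioi t) = 0
  · rw [le_antisymm ((hle₁ _).trans hIoi.le) (zero_le),
      le_antisymm ((hle₂ _).trans hIoi.le) (zero_le)]
  -- the set of right endpoints giving positive measure
  set T := {u : ℝ | t < u ∧ 0 < μ (Ioo t u)} with hT
  have hTne : T.Nonempty := by
    by_contra hc
    rw [Set.not_nonempty_iff_eq_empty] at hc
    apply hIoi
    have hsub : Ioi t ⊆ ⋃ n : ℕ, Ioo t (t + ((n : ℝ) + 1)) := by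
      intro x hx
      obtain ⟨n, hn⟩ := exists_nat_gt (x - t)
      exact mem_iUnion.mpr ⟨n, hx, by linarith⟩
    refine le_antisymm ((measure_mono hsub).trans (le_of_eq (measure_iUnion_null fun n => ?_)))
      (zero_le)
    by_contra hne
    have hmem : (t + ((n : ℝ) + 1)) ∈ T :=
      ⟨by have := Nat.cast_nonneg (α := ℝ) n; linarith, pos_iff_ne_zero.mpr hne⟩
    rw [hc] at hmem
    exact hmem
  have hbdd : BddBelow T := ⟨t, fun u hu => hu.1.le⟩
  obtain ⟨u', hu'⟩ : ∃ x, x = sInf T := ⟨_, rfl⟩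
  have htu' : t ≤ u' := by rw [hu']; exact le_csInf hTne fun u hu => hu.1.le
  have hbelow : ∀ v : ℝ, v < u' → μ (Ioo t v) = 0 := by
    intro v hv
    rcases le_or_gt v t with hvt | hvt
    · rw [Ioo_eq_empty (by intro hlt; exact absurd (hvt.trans_lt hlt) (lt_irrefl _ ∘ id) )]
      · exact measure_empty
    · by_contra hc
      rw [hu'] at hv
      exact absurd (csInf_le hbdd ⟨hvt, pos_iff_ne_zero.mpr hc⟩) (not_le.mpr hv)
  have hgap : μ (Ioo t u') = 0 := by
    have hsub : Ioo t u' ⊆ ⋃ n : ℕ, Ioo t (u' - 1 / (n + 1)) := by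
      intro x hx
      obtain ⟨n, hn⟩ := exists_nat_one_div_lt (show (0:ℝ) < u' - x by linarith [hx.2])
      exact mem_iUnion.mpr ⟨n, hx.1, by linarith⟩
    refine le_antisymm ((measure_mono hsub).trans (le_of_eq (measure_iUnion_null fun n => ?_)))
      (zero_le)
    refine hbelow _ ?_
    have hpos : (0:ℝ) < 1 / ((n : ℝ) + 1) := by positivity
    linarith
  by_cases hu's : μ {u'} ≠ 0
  -- case: `u'` is an atom, hence a good point, and `Ioi t` is `Ici u'` up to null sets
  · have htltu' : t < u' := lt_of_le_of_ne htu' (by rintro rfl; exact hu's ht)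
    have hstep : ∀ (ρ : Measure ℝ), (∀ s, ρ s ≤ μ s) → ρ (Ioi t) = ρ (Ici u') := by
      intro ρ hρ
      refine le_antisymm ?_ (measure_mono fun x hx => htltu'.trans_le hx)
      calc ρ (Ioi t) ≤ ρ (Ioo t u' ∪ Ici u') := by
            refine measure_mono fun x hx => ?_
            rcases lt_or_ge x u' with h | h
            · exact Or.inl ⟨hx, h⟩
            · exact Or.inr h
        _ ≤ ρ (Ioo t u') + ρ (Ici u') := measure_union_le _ _
        _ = ρ (Ici u') := by
            rw [le_antisymm ((hρ _).trans hgap.le) (zero_le), zero_add]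
    rw [hstep ρ₁ hle₁, hstep ρ₂ hle₂]
    exact hgood u' hu's
  -- case: `μ {u'} = 0`; approximate `Ioi u'` from the right by good points
  · push_neg at hu's
    have hstep : ∀ (ρ : Measure ℝ), (∀ s, ρ s ≤ μ s) → ρ (Ioi t) = ρ (Ioi u') := by
      intro ρ hρ
      refine le_antisymm ?_ (measure_mono (Ioi_subset_Ioi htu'))
      calc ρ (Ioi t) ≤ ρ ((Ioo t u' ∪ {u'}) ∪ Ioi u') := by
            refine measure_mono fun x hx => ?_
            rcases lt_trichotomy x u' with h | h | h
            · exact Or.inl (Or.inl ⟨hx, h⟩)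
            · exact Or.inl (Or.inr h)
            · exact Or.inr h
        _ ≤ (ρ (Ioo t u') + ρ {u'}) + ρ (Ioi u') :=
            le_trans (measure_union_le _ _) (by gcongr; exact measure_union_le _ _)
        _ = ρ (Ioi u') := by
            rw [le_antisymm ((hρ _).trans hgap.le) (zero_le),
              le_antisymm ((hρ _).trans hu's.le) (zero_le), add_zero, zero_add]
    rw [hstep ρ₁ hle₁, hstep ρ₂ hle₂]
    -- choose good points just above u'
    have hv : ∀ n : ℕ, ∃ v : ℝ, v ∈ Ioo u' (u' + 1 / (n + 1)) ∧ ρ₁ (Ici v) = ρ₂ (Ici v) := by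
      intro n
      have hpos : (0:ℝ) < 1 / (n + 1) := by positivity
      obtain ⟨u, huT, hulv⟩ := exists_lt_of_csInf_lt hTne
        (show sInf T < u' + 1 / (n + 1) by rw [← hu']; linarith)
      have hu'u : u' ≤ u := by rw [hu']; exact csInf_le hbdd huT
      have hmid : μ (Ioo u' u) ≠ 0 := by
        intro hz
        have : μ (Ioo t u) = 0 := by
          refine le_antisymm ?_ (zero_le)
          calc μ (Ioo t u) ≤ μ ((Ioo t u' ∪ {u'}) ∪ Ioo u' u) := by
                refine measure_mono fun x hx => ?_
                rcases lt_trichotomy x u' with h | h | h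
                · exact Or.inl (Or.inl ⟨hx.1, h⟩)
                · exact Or.inl (Or.inr h)
                · exact Or.inr ⟨h, hx.2⟩
            _ ≤ (μ (Ioo t u') + μ {u'}) + μ (Ioo u' u) :=
                le_trans (measure_union_le _ _) (by gcongr; exact measure_union_le _ _)
            _ = 0 := by rw [hgap, hu's, hz]; simp
        exact absurd this (pos_iff_ne_zero.mp huT.2)
      have hmid' : μ (Ioo u' u \ {w : ℝ | ¬ ρ₁ (Ici w) = ρ₂ (Ici w)}) ≠ 0 := by
        intro hz
        apply hmid
        refine le_antisymm ?_ (zero_le)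
        calc μ (Ioo u' u) ≤ μ (Ioo u' u \ {w : ℝ | ¬ ρ₁ (Ici w) = ρ₂ (Ici w)})
              + μ {w : ℝ | ¬ ρ₁ (Ici w) = ρ₂ (Ici w)} := by
              refine le_trans (measure_mono fun x hx => ?_) (measure_union_le _ _)
              by_cases hxN : ρ₁ (Ici x) = ρ₂ (Ici x)
              · exact Or.inl ⟨hx, by simp [hxN]⟩
              · exact Or.inr (by simpa using hxN)
          _ = 0 := by rw [hz, hNnull]; simp
      obtain ⟨v, hvmem⟩ := nonempty_of_measure_ne_zero hmid'
      exact ⟨v, ⟨hvmem.1.1, hvmem.1.2.trans_le (by linarith)⟩, by simpa using hvmem.2⟩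
    choose v hvmem hveq using hv
    have hUnion : (⋃ n : ℕ, Ici (v n)) = Ioi u' := by
      refine subset_antisymm (iUnion_subset fun n x hx => (hvmem n).1.trans_le hx) ?_
      intro x hx
      obtain ⟨n, hn⟩ := exists_nat_one_div_lt (show (0:ℝ) < x - u' from sub_pos.mpr hx)
      exact mem_iUnion.mpr ⟨n, le_of_lt (show v n < x by have := (hvmem n).2; linarith)⟩
    have hdir : Directed (· ⊆ ·) fun n : ℕ => Ici (v n) := by
      intro i j
      rcases le_total (v i) (v j) with hij | hij
      · exact ⟨i, subset_rfl, Ici_subset_Ici.mpr hij⟩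
      · exact ⟨j, Ici_subset_Ici.mpr hij, subset_rfl⟩
    rw [← hUnion, hdir.measure_iUnion, hdir.measure_iUnion]
    exact iSup_congr hveq

theorem stmt_8 {Ω : Type*} [MeasureSpace Ω] [IsProbabilityMeasure (ℙ : Measure Ω)]
    (X Y : Ω → ℝ) (hX : Measurable X) (hY : Measurable Y)
    (h0 : ∫ t, variance
        (fun ω => ((condDistrib Y X ℙ) (X ω) (Set.Ici t)).toReal) ℙ
        ∂(Measure.map Y ℙ) = 0) :
    IndepFun X Y ℙ := by
  set κ := condDistrib Y X ℙ with hκdef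
  set μ := Measure.map Y ℙ with hμdef
  haveI : IsProbabilityMeasure μ := Measure.isProbabilityMeasure_map hY.aemeasurable
  -- basic facts
  have hκ1 : ∀ (x : ℝ) (s : Set ℝ), κ x s ≤ 1 := fun x s => by
    simpa using measure_mono (Set.subset_univ s) |>.trans_eq (measure_univ (μ := κ x))
  have hf_meas : ∀ t : ℝ, Measurable fun ω => (κ (X ω) (Set.Ici t)).toReal := fun t =>
    ((Kernel.measurable_coe κ measurableSet_Ici).comp hX).ennreal_toReal
  have hf_bd : ∀ (t : ℝ) (ω : Ω), ‖(κ (X ω) (Set.Ici t)).toReal‖ ≤ 1 := by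
    intro t ω
    rw [Real.norm_eq_abs, abs_of_nonneg ENNReal.toReal_nonneg]
    simpa using ENNReal.toReal_mono (by simp) (hκ1 (X ω) (Set.Ici t))
  have hmem : ∀ t : ℝ, MemLp (fun ω => (κ (X ω) (Set.Ici t)).toReal) 2 ℙ := fun t =>
    (memLp_top_of_bound (hf_meas t).aestronglyMeasurable 1
      (Filter.Eventually.of_forall (hf_bd t))).mono_exponent le_top
  -- joint measurability
  have hGm : Measurable fun p : ℝ × Ω => κ (X p.2) (Set.Ici p.1) := by
    have hset : MeasurableSet {q : (ℝ × ℝ) × ℝ | q.1.1 ≤ q.2} :=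
      measurableSet_le (measurable_fst.comp measurable_fst) measurable_snd
    have h2 : Measurable fun p : ℝ × ℝ => κ p.2 (Set.Ici p.1) :=
      Kernel.measurable_kernel_prodMk_left
        (κ := Kernel.comap (mγ := Prod.instMeasurableSpace) κ (Prod.snd : ℝ × ℝ → ℝ)
          measurable_snd) hset
    exact h2.comp (measurable_fst.prodMk (hX.comp measurable_snd))
  -- the mean as a measurable function of t
  have hint_eq : ∀ t : ℝ, ∫ ω, (κ (X ω) (Set.Ici t)).toReal ∂ℙ
      = (∫⁻ ω, κ (X ω) (Set.Ici t) ∂ℙ).toReal := fun t =>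
    integral_toReal ((Kernel.measurable_coe κ measurableSet_Ici).comp hX).aemeasurable
      (Filter.Eventually.of_forall fun ω => (hκ1 _ _).trans_lt ENNReal.one_lt_top)
  have hm_meas : Measurable fun t : ℝ => ∫ ω, (κ (X ω) (Set.Ici t)).toReal ∂ℙ := by
    simp_rw [hint_eq]
    exact hGm.lintegral_prod_right'.ennreal_toReal
  -- the variance as toReal of a measurable ℝ≥0∞-valued function
  set V : ℝ → ℝ≥0∞ := fun t => ∫⁻ ω,
    (‖(κ (X ω) (Set.Ici t)).toReal - ∫ ω', (κ (X ω') (Set.Ici t)).toReal ∂ℙ‖₊ : ℝ≥0∞) ^ 2 ∂ℙ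
    with hVdef
  have hvar_eq : ∀ t : ℝ, variance (fun ω => (κ (X ω) (Set.Ici t)).toReal) ℙ = (V t).toReal :=
    fun t => rfl
  have hVm : Measurable V := by
    rw [hVdef]
    have hjm : Measurable fun p : ℝ × Ω =>
        (‖(κ (X p.2) (Set.Ici p.1)).toReal
          - ∫ ω', (κ (X ω') (Set.Ici p.1)).toReal ∂ℙ‖₊ : ℝ≥0∞) ^ 2 :=
      ((hGm.ennreal_toReal.sub (hm_meas.comp measurable_fst)).nnnorm.coe_nnreal_ennreal).pow_const 2
    exact hjm.lintegral_prod_right'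
  have hVle : ∀ t, V t ≤ 4 := by
    intro t
    have : ∀ ω : Ω, (‖(κ (X ω) (Set.Ici t)).toReal
        - ∫ ω', (κ (X ω') (Set.Ici t)).toReal ∂ℙ‖₊ : ℝ≥0∞) ^ 2 ≤ 4 := by
      intro ω
      have hb : ‖(κ (X ω) (Set.Ici t)).toReal - ∫ ω', (κ (X ω') (Set.Ici t)).toReal ∂ℙ‖₊ ≤ 2 := by
        have h1 := hf_bd t ω
        have h2 : ‖∫ ω', (κ (X ω') (Set.Ici t)).toReal ∂ℙ‖ ≤ 1 := by
          have := norm_integral_le_of_norm_le_const (μ := (ℙ : Measure Ω))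
            (Filter.Eventually.of_forall (hf_bd t))
          simpa using this
        have : ‖(κ (X ω) (Set.Ici t)).toReal - ∫ ω', (κ (X ω') (Set.Ici t)).toReal ∂ℙ‖ ≤ 2 :=
          (norm_sub_le _ _).trans (by linarith)
        exact this
      calc (‖(κ (X ω) (Set.Ici t)).toReal
          - ∫ ω', (κ (X ω') (Set.Ici t)).toReal ∂ℙ‖₊ : ℝ≥0∞) ^ 2 ≤ (2 : ℝ≥0∞) ^ 2 := by
            gcongr
            exact_mod_cast hb
        _ = 4 := by norm_num
    calc V t ≤ ∫⁻ _ : Ω, 4 ∂ℙ := lintegral_mono this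
      _ = 4 := by simp
  -- integrability of the variance function, hence a.e. vanishing
  have hInt : Integrable (fun t => variance
      (fun ω => (κ (X ω) (Set.Ici t)).toReal) ℙ) μ := by
    simp_rw [hvar_eq]
    refine ⟨hVm.ennreal_toReal.aestronglyMeasurable, ?_⟩
    refine HasFiniteIntegral.of_bounded (C := 4) (Filter.Eventually.of_forall fun t => ?_)
    rw [Real.norm_eq_abs, abs_of_nonneg ENNReal.toReal_nonneg]
    simpa using ENNReal.toReal_mono (by simp) (hVle t)
  have h0' : ∀ᵐ t ∂μ, variance (fun ω => (κ (X ω) (Set.Ici t)).toReal) ℙ = 0 := by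
    have := (integral_eq_zero_iff_of_nonneg (fun t => variance_nonneg _ _) hInt).mp h0
    filter_upwards [this] with t ht using ht
  -- the conditional survival function is a.e. constant for a.e. t
  have hconst : ∀ᵐ t ∂μ, ∀ᵐ ω ∂(ℙ : Measure Ω), κ (X ω) (Set.Ici t)
      = ENNReal.ofReal (∫ ω', (κ (X ω') (Set.Ici t)).toReal ∂ℙ) := by
    filter_upwards [h0'] with t hvt
    have hev_ne : evariance (fun ω => (κ (X ω) (Set.Ici t)).toReal) ℙ ≠ ⊤ :=
      (hmem t).evariance_lt_top.ne
    have hev0 : evariance (fun ω => (κ (X ω) (Set.Ici t)).toReal) ℙ = 0 := by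
      rw [variance] at hvt
      exact (ENNReal.toReal_eq_zero_iff _).mp hvt |>.resolve_right hev_ne
    have := (evariance_eq_zero_iff (hf_meas t).aemeasurable).mp hev0
    filter_upwards [this] with ω hω
    have hfin : κ (X ω) (Set.Ici t) ≠ ⊤ := ((hκ1 _ _).trans_lt ENNReal.one_lt_top).ne
    rw [← ENNReal.ofReal_toReal hfin, hω]
  -- conclude independence
  rw [indepFun_iff_measure_inter_preimage_eq_mul]
  intro s B hs hB
  set ρ₁ := Measure.map Y ((ℙ : Measure Ω).restrict (X ⁻¹' s)) with hρ₁def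
  set ρ₂ := (ℙ (X ⁻¹' s)) • μ with hρ₂def
  have hρ₁_apply : ∀ ⦃C : Set ℝ⦄, MeasurableSet C → ρ₁ C = ℙ (X ⁻¹' s ∩ Y ⁻¹' C) := by
    intro C hC
    rw [hρ₁def, Measure.map_apply hY hC, Measure.restrict_apply (hY hC), Set.inter_comm]
  have hμ_apply : ∀ ⦃C : Set ℝ⦄, MeasurableSet C → μ C = ℙ (Y ⁻¹' C) := by
    intro C hC
    rw [hμdef, Measure.map_apply hY hC]
  have key : ∀ᵐ t ∂μ, ρ₁ (Set.Ici t) = ρ₂ (Set.Ici t) := by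
    filter_upwards [hconst] with t hct
    have hIci : MeasurableSet (Set.Ici t) := measurableSet_Ici
    set c : ℝ≥0∞ := ENNReal.ofReal (∫ ω', (κ (X ω') (Set.Ici t)).toReal ∂ℙ) with hcdef
    have e1 : ∀ ⦃A : Set ℝ⦄, MeasurableSet A →
        ℙ (X ⁻¹' A ∩ Y ⁻¹' Set.Ici t) = c * ℙ (X ⁻¹' A) := by
      intro A hA
      rw [← setLIntegral_preimage_condDistrib hX hY.aemeasurable hIci hA]
      rw [lintegral_congr_ae (ae_restrict_of_ae hct), setLIntegral_const]
    have e3 : μ (Set.Ici t) = c := by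
      have := e1 MeasurableSet.univ
      rw [Set.preimage_univ, Set.univ_inter, measure_univ, mul_one] at this
      rw [hμ_apply hIci, this]
    rw [hρ₁_apply hIci, hρ₂def, Measure.smul_apply, smul_eq_mul, e3, e1 hs, mul_comm]
  have hρle₁ : ρ₁ ≤ μ := by
    rw [hρ₁def, hμdef]
    exact Measure.map_mono Measure.restrict_le_self hY
  have hρle₂ : ρ₂ ≤ μ := by
    rw [Measure.le_iff']
    intro C
    rw [hρ₂def, Measure.smul_apply, smul_eq_mul]
    calc ℙ (X ⁻¹' s) * μ C ≤ 1 * μ C := by gcongr; exact prob_le_one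
      _ = μ C := one_mul _
  haveI : IsFiniteMeasure ρ₁ :=
    ⟨lt_of_le_of_lt (Measure.le_iff'.mp hρle₁ Set.univ) (measure_lt_top μ _)⟩
  have hall : ∀ t : ℝ, ρ₁ (Set.Ici t) = ρ₂ (Set.Ici t) := lemA hρle₁ hρle₂ key
  have hρeq : ρ₁ = ρ₂ := Measure.ext_of_Ici ρ₁ ρ₂ hall
  have : ρ₁ B = ρ₂ B := by rw [hρeq]
  rw [hρ₁_apply hB, hρ₂def, Measure.smul_apply, smul_eq_mul, hμ_apply hB] at this
  exact this
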